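/- If N = q^k * n^2 is an odd perfect number in Eulerian form and σ(n)/q < σ(q)/n (i.e., n·σ(n) < q·σ(q)), then k = 1. -/
import Mathlib


/-- The sum-of-divisors function. -/
def sigma (n : ℕ) : ℕ := ∑ d ∈ n.divisors, d

/-- The abundancy index as a rational number. -/
noncomputable def Iq (x : ℕ) : ℚ := (sigma x : ℚ) / x

/-- The abundancy index as a real number. -/
noncomputable def Ir (x : ℕ) : ℝ := (sigma x : ℝ) / x

lemma sigma_eq_arith (m : ℕ) : sigma m = ArithmeticFunction.sigma 1 m := by
  rw [ArithmeticFunction.sigma_one_apply]; rfl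

lemma sigma_prime_pow {p i : ℕ} (hp : p.Prime) :
    sigma (p ^ i) = ∑ j ∈ Finset.range (i + 1), p ^ j := by
  rw [sigma_eq_arith, ArithmeticFunction.sigma_one_apply_prime_pow hp]

theorem stmt5 (q k n N : ℕ)
    (hq : Nat.Prime q) (hq4 : q % 4 = 1) (hk4 : k % 4 = 1)
    (hco : Nat.Coprime q n) (hN : N = q ^ k * n ^ 2)
    (hodd : Odd N) (hperf : sigma N = 2 * N) (h : n * sigma n < q * sigma q) :
    k = 1 := by
  by_contra hk1
  have hk5 : 5 ≤ k := by omega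
  have hq5 : 5 ≤ q := by
    have := hq.two_le
    rcases Nat.lt_or_ge q 5 with h5 | h5
    · interval_cases q <;> simp_all
    · exact h5
  have hn0 : n ≠ 0 := by
    rintro rfl
    simp [hN] at hodd
  -- sigma q = q + 1
  have hsq : sigma q = q + 1 := by
    rw [show sigma q = ArithmeticFunction.sigma 1 q from sigma_eq_arith q]
    rw [show q = q ^ 1 by ring, ArithmeticFunction.sigma_one_apply_prime_pow hq]
    simp [Finset.sum_range_succ]; omega
  -- multiplicativity
  have hmul : sigma N = sigma (q ^ k) * sigma (n ^ 2) := by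
    rw [hN]
    exact Nat.Coprime.sum_divisors_mul ((hco.pow_right 2).pow_left k)
  -- sigma (q^k) ≥ q^k + 1
  have hSlow : q ^ k + 1 ≤ sigma (q ^ k) := by
    rw [sigma_prime_pow hq]
    have h1 : ∑ j ∈ Finset.range (k + 1), q ^ j
        = (∑ j ∈ Finset.range k, q ^ j) + q ^ k := Finset.sum_range_succ _ _
    have h2 : 1 ≤ ∑ j ∈ Finset.range k, q ^ j := by
      calc 1 = q ^ 0 := (pow_zero q).symm
      _ ≤ ∑ j ∈ Finset.range k, q ^ j :=
        Finset.single_le_sum (fun i _ => Nat.zero_le _) (Finset.mem_range.2 (by omega))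
    omega
  -- sigma (q^k) ≡ 1 mod q, hence coprime to q
  have hmod : sigma (q ^ k) % q = 1 := by
    rw [sigma_prime_pow hq]
    have : ∑ j ∈ Finset.range (k + 1), q ^ j
        = 1 + q * ∑ j ∈ Finset.range k, q ^ j := by
      rw [Finset.sum_range_succ', Finset.mul_sum]
      simp [pow_succ, mul_comm]
      omega
    rw [this, Nat.add_mul_mod_self_left, Nat.one_mod_eq_one.2 (by omega)]
  have hcop : Nat.Coprime (sigma (q ^ k)) (q ^ k) := by
    apply Nat.Coprime.pow_right
    have : ¬ q ∣ sigma (q ^ k) := by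
      intro hd
      have := Nat.eq_zero_of_dvd_of_lt hd
      omega
    exact (Nat.coprime_comm.mp ((Nat.Prime.coprime_iff_not_dvd hq).2 this))
  -- sigma (q^k) ∣ 2 * n^2
  have hdvd : sigma (q ^ k) ∣ 2 * n ^ 2 := by
    have hd : sigma (q ^ k) ∣ 2 * n ^ 2 * q ^ k := by
      refine ⟨sigma (n ^ 2), ?_⟩
      rw [← hmul, hperf, hN]; ring
    exact hcop.dvd_of_dvd_mul_right hd
  have hle : sigma (q ^ k) ≤ 2 * n ^ 2 :=
    Nat.le_of_dvd (by positivity) hdvd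
  -- n^2 ≤ n * sigma n < q * (q+1)
  have hsn : n ≤ sigma n := by
    unfold sigma
    exact Finset.single_le_sum (f := fun d => d) (fun i _ => Nat.zero_le _)
      (Nat.mem_divisors_self n hn0)
  have hn2 : n ^ 2 < q * (q + 1) := by
    calc n ^ 2 = n * n := sq n
    _ ≤ n * sigma n := Nat.mul_le_mul_left n hsn
    _ < q * sigma q := h
    _ = q * (q + 1) := by rw [hsq]
  -- q^5 ≤ q^k, contradiction
  have hq5k : q ^ 5 ≤ q ^ k := Nat.pow_le_pow_right (by omega) hk5
  have : q ^ 5 < 2 * (q * (q + 1)) := by omega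
  have h3 : 125 ≤ q ^ 3 := by nlinarith
  have h53 : q ^ 5 = q ^ 3 * q ^ 2 := by ring
  nlinarith [sq_nonneg q]
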